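/- Let n, k, N ≥ 1, let λ = (λ_1 ≥ λ_2 ≥ … ≥ λ_n ≥ 0) be a partition with at most n parts, and X = {x_1,…,x_n}. Then applying the substitution ∫_Y to the product of determinants det(x_i^{λ_{n−j+1}+j−1})_{1≤i,j≤n} · (det(x_i^{j−1})_{1≤i,j≤n})^{2k−1} (which equals S_λ(X)·Δ(X)^{2k}) yields the shifted Hankel hyperdeterminant: ∫_Y ( det(x_i^{λ_{n−j+1}+j−1}) · det(x_i^{j−1})^{2k−1} ) = ∑_{(σ_1,…,σ_{2k}) ∈ (S_n)^{2k}} sign(σ_1)⋯sign(σ_{2k}) · ∏_{i=1}^n Λ^{(σ_1(i)−1)+⋯+(σ_{2k}(i)−1)+λ_{n−σ_1(i)+1}}(Y), i.e. (1/n!)∫_Y S_λ(X)Δ(X)^{2k} = H^k_{reverse_n(λ)}(Y) where reverse_n(λ) = (λ_n, λ_{n−1}, …, λ_1). -/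

import Mathlib

/-- The scaled hyperdeterminant `DET` of a `k`-th order hypermatrix. -/
noncomputable def DET {R : Type*} [CommRing R] (n k : ℕ)
    (M : (Fin k → Fin n) → R) : R :=
  ∑ σ : Fin k → Equiv.Perm (Fin n),
    (∏ s, (Equiv.Perm.sign (σ s) : ℤ)) • ∏ i, M (fun s => σ s i)

/-- `Λ N p` is the `p`-th elementary symmetric polynomial in `N` variables,
with the convention that it vanishes for `p < 0` (and for `p > N`). -/
noncomputable def Λ (N : ℕ) (p : ℤ) : MvPolynomial (Fin N) ℤ :=
  if 0 ≤ p then MvPolynomial.esymm (Fin N) ℤ p.toNat else 0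

/-- The substitution `∫_Y` sending each monomial `x_1^{d_1} ⋯ x_n^{d_n}` to
`Λ^{d_1}(Y) ⋯ Λ^{d_n}(Y)`, extended `ℤ`-linearly. -/
noncomputable def intY (n N : ℕ) (P : MvPolynomial (Fin n) ℤ) :
    MvPolynomial (Fin N) ℤ :=
  ∑ d ∈ P.support, P.coeff d • ∏ i, Λ N ((d i : ℤ))

open MvPolynomial

noncomputable def L (n N : ℕ) : MvPolynomial (Fin n) ℤ →ₗ[ℤ] MvPolynomial (Fin N) ℤ :=
  Finsupp.lsum ℤ (fun d : Fin n →₀ ℕ =>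
    LinearMap.toSpanSingleton ℤ _ (∏ i, Λ N ((d i : ℤ)))) ∘ₗ
    (AddMonoidAlgebra.coeffLinearEquiv ℤ).toLinearMap

lemma intY_eq (n N : ℕ) (P : MvPolynomial (Fin n) ℤ) : intY n N P = L n N P := rfl

lemma intY_monomial (n N : ℕ) (d : Fin n →₀ ℕ) :
    intY n N (monomial d 1) = ∏ i, Λ N ((d i : ℤ)) := by
  unfold intY
  rw [support_monomial]
  simp

lemma intY_prod_X_pow (n N : ℕ) (e : Fin n → ℕ) :
    intY n N (∏ i, (X i : MvPolynomial (Fin n) ℤ) ^ e i) = ∏ i, Λ N ((e i : ℤ)) := by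
  set d : Fin n →₀ ℕ := Finsupp.equivFunOnFinite.symm e with hd
  have hde : ∀ i, d i = e i := fun i => rfl
  have h1 : (∏ i, (X i : MvPolynomial (Fin n) ℤ) ^ e i) = monomial d 1 := by
    rw [← prod_X_pow_eq_monomial]
    rw [Finset.prod_subset (Finset.subset_univ d.support)]
    · exact Finset.prod_congr rfl fun i _ => by rw [hde]
    · intro i _ hi
      simp only [Finsupp.notMem_support_iff] at hi
      rw [hi, pow_zero]
  rw [h1, intY_monomial]
  exact Finset.prod_congr rfl fun i _ => by rw [hde]

lemma prod_zsmul {n : ℕ} {m : ℕ} (z : Fin m → ℤ) (P : Fin m → MvPolynomial (Fin n) ℤ) :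
    ∏ s, z s • P s = (∏ s, z s) • ∏ s, P s := by
  simp only [zsmul_eq_mul, Finset.prod_mul_distrib, Int.cast_prod]

lemma key (n N m : ℕ) (a : Fin m → Fin n → ℕ) :
    intY n N (∏ s : Fin m,
        (Matrix.of fun i j : Fin n => (X i : MvPolynomial (Fin n) ℤ) ^ (a s j)).det)
      = ∑ σ : Fin m → Equiv.Perm (Fin n),
          (∏ s, (Equiv.Perm.sign (σ s) : ℤ)) •
            ∏ i, Λ N ((∑ s, a s (σ s i) : ℕ) : ℤ) := by
  have hdet : ∀ s : Fin m,
      (Matrix.of fun i j : Fin n => (X i : MvPolynomial (Fin n) ℤ) ^ (a s j)).det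
        = ∑ σ : Equiv.Perm (Fin n),
            (Equiv.Perm.sign σ : ℤ) • ∏ i, (X i : MvPolynomial (Fin n) ℤ) ^ a s (σ i) := by
    intro s
    rw [← Matrix.det_transpose, Matrix.det_apply']
    refine Finset.sum_congr rfl fun σ _ => ?_
    rw [zsmul_eq_mul]
    rfl
  simp only [hdet]
  rw [Finset.prod_univ_sum, Fintype.piFinset_univ, intY_eq, map_sum]
  refine Finset.sum_congr rfl fun σ _ => ?_
  rw [prod_zsmul, map_smul]
  congr 1
  have : (∏ s, ∏ i, (X i : MvPolynomial (Fin n) ℤ) ^ a s (σ s i))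
      = ∏ i, (X i : MvPolynomial (Fin n) ℤ) ^ ∑ s, a s (σ s i) := by
    rw [Finset.prod_comm]
    exact Finset.prod_congr rfl fun i _ => Finset.prod_pow_eq_pow_sum _ _ _
  rw [this, ← intY_eq, intY_prod_X_pow]

/-- Applying `∫_Y` to `S_λ(X) Δ(X)^{2k}`, written as the product of alternants
`det(x_i^{λ_{n−j+1}+j−1}) ⋅ det(x_i^{j−1})^{2k−1}`, yields the shifted Hankel
hyperdeterminant: `(1/n!) ∫_Y S_λ(X) Δ(X)^{2k} = H^k_{reverseₙ(λ)}(Y)`. -/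
theorem intY_schur_vandermonde_pow_eq_shifted_hankel
    (n k N : ℕ) (hn : 1 ≤ n) (hk : 1 ≤ k) (hN : 1 ≤ N)
    (lam : Fin n → ℕ) (hlam : Antitone lam) :
    intY n N
        ((Matrix.of fun i j : Fin n =>
            MvPolynomial.X i ^ (lam ⟨n - 1 - (j : ℕ), by omega⟩ + (j : ℕ))).det *
          (Matrix.of fun i j : Fin n =>
            (MvPolynomial.X i : MvPolynomial (Fin n) ℤ) ^ (j : ℕ)).det ^ (2 * k - 1))
      = DET n (2 * k) (fun i =>
          Λ N ((∑ s, ((i s : ℕ) : ℤ))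
            + (lam ⟨n - 1 - (i ⟨0, by omega⟩ : ℕ), by omega⟩ : ℤ))) := by
  set z : Fin (2 * k) := ⟨0, by omega⟩ with hz
  set a : Fin (2 * k) → Fin n → ℕ :=
    fun s j => (if s = z then lam ⟨n - 1 - (j : ℕ), by omega⟩ else 0) + (j : ℕ) with ha
  have hvdm : ∀ s : Fin (2 * k), s ≠ z →
      (Matrix.of fun i j : Fin n => (X i : MvPolynomial (Fin n) ℤ) ^ (a s j))
        = Matrix.of fun i j : Fin n => (X i : MvPolynomial (Fin n) ℤ) ^ (j : ℕ) := by
    intro s hs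
    refine Matrix.ext fun i j => ?_
    simp [ha, hs]
  have hsp : (Matrix.of fun i j : Fin n =>
        (X i : MvPolynomial (Fin n) ℤ) ^ (lam ⟨n - 1 - (j : ℕ), by omega⟩ + (j : ℕ)))
      = Matrix.of fun i j : Fin n => (X i : MvPolynomial (Fin n) ℤ) ^ a z j :=
    Matrix.ext fun i j => by simp [ha]
  have hLHS :
      ((Matrix.of fun i j : Fin n =>
          (MvPolynomial.X i : MvPolynomial (Fin n) ℤ) ^ (lam ⟨n - 1 - (j : ℕ), by omega⟩ + (j : ℕ))).det *
        (Matrix.of fun i j : Fin n =>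
          (MvPolynomial.X i : MvPolynomial (Fin n) ℤ) ^ (j : ℕ)).det ^ (2 * k - 1))
      = ∏ s : Fin (2 * k),
          (Matrix.of fun i j : Fin n => (X i : MvPolynomial (Fin n) ℤ) ^ (a s j)).det := by
    rw [← Finset.mul_prod_erase Finset.univ _ (Finset.mem_univ z)]
    congr 1
    rw [Finset.prod_congr rfl
        (fun s hs => congrArg Matrix.det (hvdm s (Finset.ne_of_mem_erase hs))),
      Finset.prod_const, Finset.card_erase_of_mem (Finset.mem_univ z),
      Finset.card_univ, Fintype.card_fin]
  rw [hLHS, key]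
  unfold DET
  refine Finset.sum_congr rfl fun σ _ => ?_
  congr 1
  refine Finset.prod_congr rfl fun i _ => ?_
  congr 1
  have : ∑ s, a s (σ s i) = (∑ s, (σ s i : ℕ)) + lam ⟨n - 1 - (σ z i : ℕ), by omega⟩ := by
    simp only [ha]
    rw [Finset.sum_add_distrib, Finset.sum_ite_eq' Finset.univ z
      (fun s => lam ⟨n - 1 - (σ s i : ℕ), by omega⟩),
      if_pos (Finset.mem_univ z), add_comm]
  rw [this]
  push_cast
  ring
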